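/- Let (Ω, F, P) be a probability space, ρ ∈ (0,1), α > 0. Let v_t : Ω → ℝ (t ∈ ℕ₀) be nonnegative random variables and let k_n : Ω → ℕ₀ (n ∈ ℕ₀) be random variables such that almost surely (k_n) is strictly increasing with k_0 = 0 and (v_t) is a cycle-Lyapunov sequence for (ρ, α, (k_n)). Suppose v_0 is independent of the σ-algebra generated by (Δ_n)_{n≥1}, that E[v_0] < ∞, and that Σ_{n=0}^{∞} E[Ξ(n)] < ∞. Then Σ_{t=0}^{∞} E[v_t] ≤ (1 + α/(1−ρ)) · E[v_0] · Σ_{n=0}^{∞} E[Ξ(n)] < ∞. -/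

import Mathlib

open MeasureTheory
open scoped ENNReal

/-- `v : ℕ → ℝ` is a cycle-Lyapunov sequence for `(ρ, α, k)`: it is nonnegative, satisfies
`v (k n + 1) ≤ α * v (k n)` at the start of each cycle, and contracts by `ρ` at every step
`t` with `k n + 1 ≤ t ≤ k (n+1) - 1` within a cycle. -/
def IsCycleLyapunov (ρ α : ℝ) (k : ℕ → ℕ) (v : ℕ → ℝ) : Prop :=
  (∀ t, 0 ≤ v t) ∧
  (∀ n, v (k n + 1) ≤ α * v (k n)) ∧
  (∀ n t, k n + 1 ≤ t → t < k (n + 1) → v (t + 1) ≤ ρ * v t)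

/-- `Ξ(n) = α^n · ρ^{Σ_{i=1}^{n} (Δ_i − 1)}` where `Δ_i = k i − k (i−1)`; in particular
`Ξ(0) = 1` (empty sum). -/
noncomputable def Xi (ρ α : ℝ) (k : ℕ → ℕ) (n : ℕ) : ℝ :=
  α ^ n * ρ ^ (∑ i ∈ Finset.range n, (k (i + 1) - k i - 1))

section Det

variable {ρ α : ℝ} {k : ℕ → ℕ} {v : ℕ → ℝ}

lemma Xi_nonneg (hρ : 0 < ρ) (hα : 0 < α) (k : ℕ → ℕ) (n : ℕ) : 0 ≤ Xi ρ α k n :=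
  mul_nonneg (pow_nonneg hα.le _) (pow_nonneg hρ.le _)

lemma geom_partial (hρ0 : 0 < ρ) (hρ1 : ρ < 1) (m : ℕ) :
    ∑ i ∈ Finset.range m, ρ ^ i ≤ 1 / (1 - ρ) := by
  have h := Summable.sum_le_tsum (Finset.range m) (fun i _ => pow_nonneg hρ0.le i)
    (summable_geometric_of_lt_one hρ0.le hρ1)
  rwa [tsum_geometric_of_lt_one hρ0.le hρ1, ← one_div] at h

lemma step_bound (hρ : ρ ∈ Set.Ioo (0:ℝ) 1) (hL : IsCycleLyapunov ρ α k v)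
    (n : ℕ) : ∀ j, k n + 1 + j ≤ k (n + 1) → v (k n + 1 + j) ≤ ρ ^ j * (α * v (k n)) := by
  intro j
  induction j with
  | zero => intro _; simpa using hL.2.1 n
  | succ j ih =>
    intro hj
    have h1 : k n + 1 ≤ k n + 1 + j := by omega
    have h2 : k n + 1 + j < k (n + 1) := by omega
    have := hL.2.2 n (k n + 1 + j) h1 h2
    have h3 : v (k n + 1 + j) ≤ ρ ^ j * (α * v (k n)) := ih (by omega)
    have h4 : ρ * v (k n + 1 + j) ≤ ρ * (ρ ^ j * (α * v (k n))) :=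
      mul_le_mul_of_nonneg_left h3 hρ.1.le
    calc v (k n + 1 + (j + 1)) = v (k n + 1 + j + 1) := by ring_nf
      _ ≤ ρ * v (k n + 1 + j) := this
      _ ≤ ρ * (ρ ^ j * (α * v (k n))) := h4
      _ = ρ ^ (j + 1) * (α * v (k n)) := by ring

lemma vk_le (hρ : ρ ∈ Set.Ioo (0:ℝ) 1) (hα : 0 < α) (hk : StrictMono k) (hk0 : k 0 = 0)
    (hL : IsCycleLyapunov ρ α k v) (n : ℕ) : v (k n) ≤ Xi ρ α k n * v 0 := by
  induction n with
  | zero => simp [Xi, hk0]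
  | succ n ih =>
    have hlt : k n < k (n + 1) := hk (by omega)
    have heq : k n + 1 + (k (n + 1) - k n - 1) = k (n + 1) := by omega
    have hb := step_bound hρ hL n (k (n + 1) - k n - 1) (by omega)
    rw [heq] at hb
    have hXi : Xi ρ α k (n + 1) = (ρ ^ (k (n + 1) - k n - 1) * α) * Xi ρ α k n := by
      unfold Xi
      rw [Finset.sum_range_succ, pow_add, pow_succ]
      ring
    have hnn : 0 ≤ ρ ^ (k (n + 1) - k n - 1) * α :=
      mul_nonneg (pow_nonneg hρ.1.le _) hα.le
    calc v (k (n + 1)) ≤ ρ ^ (k (n + 1) - k n - 1) * (α * v (k n)) := hb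
      _ ≤ ρ ^ (k (n + 1) - k n - 1) * (α * (Xi ρ α k n * v 0)) := by
          have := mul_le_mul_of_nonneg_left ih hα.le
          exact mul_le_mul_of_nonneg_left this (pow_nonneg hρ.1.le _)
      _ = Xi ρ α k (n + 1) * v 0 := by rw [hXi]; ring

lemma cycle_sum_le (hρ : ρ ∈ Set.Ioo (0:ℝ) 1) (hα : 0 < α) (hk : StrictMono k)
    (hL : IsCycleLyapunov ρ α k v) (n : ℕ) :
    ∑ t ∈ Finset.Ico (k n) (k (n + 1)), v t ≤ (1 + α / (1 - ρ)) * v (k n) := by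
  have hlt : k n < k (n + 1) := hk (by omega)
  have hvnn := hL.1
  obtain ⟨m, hm⟩ : ∃ m, k (n + 1) - k n = m + 1 := ⟨k (n+1) - k n - 1, by omega⟩
  rw [Finset.sum_Ico_eq_sum_range, hm, Finset.sum_range_succ']
  simp only [add_zero]
  have hbound : ∑ j ∈ Finset.range m, v (k n + (j + 1)) ≤
      (∑ j ∈ Finset.range m, ρ ^ j) * (α * v (k n)) := by
    rw [Finset.sum_mul]
    refine Finset.sum_le_sum fun j hj => ?_
    have hj' : j < m := Finset.mem_range.mp hj
    have := step_bound hρ hL n j (by omega)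
    calc v (k n + (j + 1)) = v (k n + 1 + j) := by ring_nf
      _ ≤ ρ ^ j * (α * v (k n)) := this
  have hgeo := geom_partial hρ.1 hρ.2 m
  have hαv : 0 ≤ α * v (k n) := mul_nonneg hα.le (hvnn _)
  have : (∑ j ∈ Finset.range m, ρ ^ j) * (α * v (k n)) ≤ (1 / (1 - ρ)) * (α * v (k n)) :=
    mul_le_mul_of_nonneg_right hgeo hαv
  have hfin : ∑ j ∈ Finset.range m, v (k n + (j + 1)) + v (k n) ≤
      (1 / (1 - ρ)) * (α * v (k n)) + v (k n) := by linarith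
  calc ∑ j ∈ Finset.range m, v (k n + (j + 1)) + v (k n)
      ≤ (1 / (1 - ρ)) * (α * v (k n)) + v (k n) := hfin
    _ = (1 + α / (1 - ρ)) * v (k n) := by field_simp; ring

lemma c_nonneg (hρ : ρ ∈ Set.Ioo (0:ℝ) 1) (hα : 0 < α) : 0 ≤ 1 + α / (1 - ρ) := by
  have : 0 < 1 - ρ := by linarith [hρ.2]
  positivity

lemma total_sum_le (hρ : ρ ∈ Set.Ioo (0:ℝ) 1) (hα : 0 < α) (hk : StrictMono k) (hk0 : k 0 = 0)
    (hL : IsCycleLyapunov ρ α k v) (N : ℕ) :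
    ∑ t ∈ Finset.range (k N), v t ≤
      (1 + α / (1 - ρ)) * (v 0 * ∑ n ∈ Finset.range N, Xi ρ α k n) := by
  induction N with
  | zero => simp [hk0]
  | succ N ih =>
    have hle : k N ≤ k (N + 1) := (hk (by omega : N < N + 1)).le
    have hsplit : ∑ t ∈ Finset.range (k (N + 1)), v t =
        ∑ t ∈ Finset.range (k N), v t + ∑ t ∈ Finset.Ico (k N) (k (N + 1)), v t := by
      simp only [Finset.range_eq_Ico]
      exact (Finset.sum_Ico_consecutive _ (Nat.zero_le _) hle).symm
    have hcyc := cycle_sum_le hρ hα hk hL N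
    have hvk := vk_le hρ hα hk hk0 hL N
    have hc := c_nonneg hρ hα
    have : (1 + α / (1 - ρ)) * v (k N) ≤ (1 + α / (1 - ρ)) * (Xi ρ α k N * v 0) :=
      mul_le_mul_of_nonneg_left hvk hc
    rw [hsplit, Finset.sum_range_succ]
    calc ∑ t ∈ Finset.range (k N), v t + ∑ t ∈ Finset.Ico (k N) (k (N + 1)), v t
        ≤ (1 + α / (1 - ρ)) * (v 0 * ∑ n ∈ Finset.range N, Xi ρ α k n)
          + (1 + α / (1 - ρ)) * (Xi ρ α k N * v 0) := by
          have := hcyc.trans this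
          linarith
      _ = (1 + α / (1 - ρ)) * (v 0 * (∑ n ∈ Finset.range N, Xi ρ α k n + Xi ρ α k N)) := by ring

lemma pointwise_tsum_le (hρ : ρ ∈ Set.Ioo (0:ℝ) 1) (hα : 0 < α) (hk : StrictMono k)
    (hk0 : k 0 = 0) (hL : IsCycleLyapunov ρ α k v) :
    (∑' t : ℕ, ENNReal.ofReal (v t)) ≤
      ENNReal.ofReal (1 + α / (1 - ρ)) *
        (ENNReal.ofReal (v 0) * ∑' n : ℕ, ENNReal.ofReal (Xi ρ α k n)) := by
  rw [ENNReal.tsum_eq_iSup_nat]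
  refine iSup_le fun N => ?_
  have h1 : ∑ t ∈ Finset.range N, v t ≤ ∑ t ∈ Finset.range (k N), v t :=
    Finset.sum_le_sum_of_subset_of_nonneg
      (Finset.range_subset_range.mpr (hk.le_apply.trans_eq (by simp)))
      (fun t _ _ => hL.1 t)
  have h2 := total_sum_le hρ hα hk hk0 hL N
  have hc := c_nonneg hρ hα
  calc ∑ t ∈ Finset.range N, ENNReal.ofReal (v t)
      = ENNReal.ofReal (∑ t ∈ Finset.range N, v t) :=
        (ENNReal.ofReal_sum_of_nonneg fun t _ => hL.1 t).symm
    _ ≤ ENNReal.ofReal ((1 + α / (1 - ρ)) * (v 0 * ∑ n ∈ Finset.range N, Xi ρ α k n)) :=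
        ENNReal.ofReal_le_ofReal (h1.trans h2)
    _ = ENNReal.ofReal (1 + α / (1 - ρ)) *
          (ENNReal.ofReal (v 0) * ENNReal.ofReal (∑ n ∈ Finset.range N, Xi ρ α k n)) := by
        rw [ENNReal.ofReal_mul hc, ENNReal.ofReal_mul (hL.1 0)]
    _ = ENNReal.ofReal (1 + α / (1 - ρ)) *
          (ENNReal.ofReal (v 0) * ∑ n ∈ Finset.range N, ENNReal.ofReal (Xi ρ α k n)) := by
        rw [ENNReal.ofReal_sum_of_nonneg fun n _ => Xi_nonneg hρ.1 hα k n]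
    _ ≤ _ := by
        gcongr
        exact ENNReal.sum_le_tsum _

end Det

theorem stochastic_total_cost_bound
    {Ω : Type*} [MeasurableSpace Ω] (P : Measure Ω) [IsProbabilityMeasure P]
    (ρ α : ℝ) (hρ : ρ ∈ Set.Ioo (0 : ℝ) 1) (hα : 0 < α)
    (v : ℕ → Ω → ℝ) (k : ℕ → Ω → ℕ)
    (hvmeas : ∀ t, Measurable (v t)) (hkmeas : ∀ n, Measurable (k n))
    (hv0nn : ∀ t ω, 0 ≤ v t ω)
    (hae : ∀ᵐ ω ∂P, StrictMono (fun n => k n ω) ∧ k 0 ω = 0 ∧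
      IsCycleLyapunov ρ α (fun n => k n ω) (fun t => v t ω))
    (hindep : ProbabilityTheory.Indep
      (MeasurableSpace.comap (v 0) inferInstance)
      (⨆ n : ℕ, MeasurableSpace.comap (fun ω => k (n + 1) ω - k n ω) inferInstance) P)
    (hv0 : (∫⁻ ω, ENNReal.ofReal (v 0 ω) ∂P) < ⊤)
    (hXi : (∑' n : ℕ, ∫⁻ ω, ENNReal.ofReal (Xi ρ α (fun m => k m ω) n) ∂P) < ⊤) :
    (∑' t : ℕ, ∫⁻ ω, ENNReal.ofReal (v t ω) ∂P) ≤
      ENNReal.ofReal (1 + α / (1 - ρ)) * (∫⁻ ω, ENNReal.ofReal (v 0 ω) ∂P) *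
        (∑' n : ℕ, ∫⁻ ω, ENNReal.ofReal (Xi ρ α (fun m => k m ω) n) ∂P) ∧
    (∑' t : ℕ, ∫⁻ ω, ENNReal.ofReal (v t ω) ∂P) < ⊤ := by
  set c : ℝ≥0∞ := ENNReal.ofReal (1 + α / (1 - ρ)) with hc
  set f0 : Ω → ℝ≥0∞ := fun ω => ENNReal.ofReal (v 0 ω) with hf0
  set g : Ω → ℝ≥0∞ := fun ω => ∑' n : ℕ, ENNReal.ofReal (Xi ρ α (fun m => k m ω) n) with hg
  -- measurability of each Xi term w.r.t. a given σ-algebra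
  have hXiM : ∀ n : ℕ, Measurable[⨆ n : ℕ, MeasurableSpace.comap (fun ω => k (n + 1) ω - k n ω) inferInstance] (fun ω => ENNReal.ofReal (Xi ρ α (fun m => k m ω) n)) := by
    intro n
    have hS : Measurable[⨆ n : ℕ, MeasurableSpace.comap (fun ω => k (n + 1) ω - k n ω) inferInstance] (fun ω => ∑ i ∈ Finset.range n, (k (i + 1) ω - k i ω - 1)) := by
      refine Finset.measurable_sum _ fun i _ => ?_
      have hΔ : Measurable[⨆ n : ℕ, MeasurableSpace.comap (fun ω => k (n + 1) ω - k n ω) inferInstance] (fun ω => k (i + 1) ω - k i ω) :=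
        (Measurable.of_comap_le le_rfl).mono
          (le_iSup (fun n => MeasurableSpace.comap (fun ω => k (n + 1) ω - k n ω) inferInstance) i)
          le_rfl
      exact hΔ.sub measurable_const
    exact (measurable_from_nat
      (f := fun s : ℕ => ENNReal.ofReal (α ^ n * ρ ^ s))).comp hS
  have hXimeas : ∀ n : ℕ, Measurable (fun ω => ENNReal.ofReal (Xi ρ α (fun m => k m ω) n)) := by
    intro n
    have hS : Measurable (fun ω => ∑ i ∈ Finset.range n, (k (i + 1) ω - k i ω - 1)) :=
      Finset.measurable_sum _ fun i _ => ((hkmeas (i + 1)).sub (hkmeas i)).sub measurable_const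
    exact (measurable_from_nat
      (f := fun s : ℕ => ENNReal.ofReal (α ^ n * ρ ^ s))).comp hS
  have hMle : (⨆ n : ℕ, MeasurableSpace.comap (fun ω => k (n + 1) ω - k n ω) inferInstance) ≤ ‹MeasurableSpace Ω› := by
    refine iSup_le fun n => ?_
    exact measurable_iff_comap_le.mp ((hkmeas (n + 1)).sub (hkmeas n))
  have hgM : Measurable[⨆ n : ℕ, MeasurableSpace.comap (fun ω => k (n + 1) ω - k n ω) inferInstance] g := Measurable.ennreal_tsum hXiM
  have hgmeas : Measurable g := Measurable.ennreal_tsum hXimeas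
  have hf0meas : Measurable f0 := (hvmeas 0).ennreal_ofReal
  have hf0M : Measurable[MeasurableSpace.comap (v 0) inferInstance] f0 :=
    ENNReal.measurable_ofReal.comp (Measurable.of_comap_le le_rfl)
  -- step 1: swap tsum and integral
  have hswap : (∑' t : ℕ, ∫⁻ ω, ENNReal.ofReal (v t ω) ∂P) =
      ∫⁻ ω, ∑' t : ℕ, ENNReal.ofReal (v t ω) ∂P :=
    (lintegral_tsum fun t => ((hvmeas t).ennreal_ofReal).aemeasurable).symm
  -- step 2: pointwise bound
  have hpt : ∫⁻ ω, (∑' t : ℕ, ENNReal.ofReal (v t ω)) ∂P ≤ ∫⁻ ω, c * (f0 ω * g ω) ∂P := by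
    refine lintegral_mono_ae ?_
    filter_upwards [hae] with ω hω
    exact pointwise_tsum_le hρ hα hω.1 hω.2.1 hω.2.2
  -- step 3/4: pull out constant and use independence
  have hmul : ∫⁻ ω, f0 ω * g ω ∂P = (∫⁻ ω, f0 ω ∂P) * ∫⁻ ω, g ω ∂P :=
    ProbabilityTheory.lintegral_mul_eq_lintegral_mul_lintegral_of_independent_measurableSpace
      (measurable_iff_comap_le.mp (hvmeas 0)) hMle hindep hf0M hgM
  have hconst : ∫⁻ ω, c * (f0 ω * g ω) ∂P = c * ∫⁻ ω, f0 ω * g ω ∂P :=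
    lintegral_const_mul c (hf0meas.mul hgmeas)
  -- step 5: integral of g
  have hgint : ∫⁻ ω, g ω ∂P =
      ∑' n : ℕ, ∫⁻ ω, ENNReal.ofReal (Xi ρ α (fun m => k m ω) n) ∂P :=
    lintegral_tsum fun n => (hXimeas n).aemeasurable
  have hmain : (∑' t : ℕ, ∫⁻ ω, ENNReal.ofReal (v t ω) ∂P) ≤
      c * (∫⁻ ω, ENNReal.ofReal (v 0 ω) ∂P) *
        (∑' n : ℕ, ∫⁻ ω, ENNReal.ofReal (Xi ρ α (fun m => k m ω) n) ∂P) := by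
    rw [hswap]
    calc ∫⁻ ω, (∑' t : ℕ, ENNReal.ofReal (v t ω)) ∂P
        ≤ ∫⁻ ω, c * (f0 ω * g ω) ∂P := hpt
      _ = c * ((∫⁻ ω, f0 ω ∂P) * ∫⁻ ω, g ω ∂P) := by rw [hconst, hmul]
      _ = _ := by rw [hgint, mul_assoc]
  refine ⟨hmain, lt_of_le_of_lt hmain ?_⟩
  exact ENNReal.mul_lt_top (ENNReal.mul_lt_top ENNReal.ofReal_lt_top hv0) hXi
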